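/- Let R be a commutative ring, N a Noetherian R-module, and K a submodule of N. If for every associated prime p of N, the intersection of K_p with the socle Soc_{R_p}(N_p) is zero, then K = 0. -/

import Mathlib

/-- Generalization of `exists_le_isAssociatedPrime_of_isNoetherianRing` to Noetherian modules
over an arbitrary commutative ring. -/
theorem exists_le_isAssociatedPrime_of_isNoetherian' {R M : Type*} [CommRing R] [AddCommGroup M]
    [Module R M] [IsNoetherian R M] (x : M) (hx : x ≠ 0) :
    ∃ P : Ideal R, IsAssociatedPrime P M ∧ (∃ y : M, P = (Submodule.span R {y}).annihilator) ∧
      (Submodule.span R {x}).annihilator ≤ P := by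
  have hann : (Submodule.span R {x}).annihilator ≠ ⊤ := by
    rwa [Ne, Ideal.eq_top_iff_one, Submodule.mem_annihilator_span_singleton, one_smul]
  obtain ⟨n, s, hs⟩ := Module.Finite.exists_fin (R := R) (M := M)
  set f : R →ₗ[R] (Fin n → M) :=
    LinearMap.pi (fun i => LinearMap.toSpanSingleton R M (s i)) with hf
  have hker : ∀ y : M, LinearMap.ker f ≤ (Submodule.span R {y}).annihilator := by
    intro y r hr
    rw [Submodule.mem_annihilator_span_singleton]
    have hy : y ∈ Submodule.span R (Set.range s) := hs ▸ Submodule.mem_top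
    induction hy using Submodule.span_induction with
    | mem z hz =>
      obtain ⟨i, rfl⟩ := hz
      have h0 : f r = 0 := LinearMap.mem_ker.mp hr
      simpa [hf, LinearMap.pi_apply, LinearMap.toSpanSingleton_apply] using congrFun h0 i
    | zero => exact smul_zero r
    | add a b _ _ ha hb => rw [smul_add, ha, hb, add_zero]
    | smul a z _ hz => rw [smul_comm, hz, smul_zero]
  have hNoeth : IsNoetherian R (R ⧸ LinearMap.ker f) :=
    isNoetherian_of_linearEquiv f.quotKerEquivRange.symm
  have H : ∀ S : Set (Ideal R), (∀ P ∈ S, LinearMap.ker f ≤ P) → S.Nonempty →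
      ∃ P ∈ S, ∀ I ∈ S, ¬ P < I := by
    rintro S hS ⟨P0, hP0⟩
    obtain ⟨J, ⟨P, hPS, rfl⟩, hmax⟩ := set_has_maximal_iff_noetherian.mpr hNoeth
      (Submodule.map (LinearMap.ker f).mkQ '' S) ⟨_, ⟨P0, hP0, rfl⟩⟩
    refine ⟨P, hPS, fun I hIS hlt => ?_⟩
    have h1 : Submodule.map (LinearMap.ker f).mkQ P ≤ Submodule.map (LinearMap.ker f).mkQ I :=
      Submodule.map_mono hlt.le
    have h2 := hmax _ ⟨I, hIS, rfl⟩
    have heq : Submodule.map (LinearMap.ker f).mkQ P = Submodule.map (LinearMap.ker f).mkQ I :=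
      h1.lt_or_eq.resolve_left h2
    have heq2 : P = I := by
      have := congrArg (Submodule.comap (LinearMap.ker f).mkQ) heq
      rwa [Submodule.comap_map_mkQ, Submodule.comap_map_mkQ,
        sup_eq_right.mpr (hS P hPS), sup_eq_right.mpr (hS I hIS)] at this
    exact hlt.ne heq2
  obtain ⟨P, ⟨l, h₁, y, rfl⟩, h₃⟩ := H
    { P | (Submodule.span R {x}).annihilator ≤ P ∧ P ≠ ⊤ ∧
        ∃ y : M, P = (Submodule.span R {y}).annihilator }
    (by rintro P ⟨-, -, y, rfl⟩; exact hker y)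
    ⟨(Submodule.span R {x}).annihilator, le_rfl, hann, x, rfl⟩
  have hPrime : (Submodule.span R {y}).annihilator.IsPrime := by
    refine ⟨h₁, ?_⟩
    intro a b hab
    rw [or_iff_not_imp_left]
    intro ha
    rw [Submodule.mem_annihilator_span_singleton] at ha hab
    have H₁ : (Submodule.span R {y}).annihilator ≤ (Submodule.span R {a • y}).annihilator := by
      intro c hc
      rw [Submodule.mem_annihilator_span_singleton] at hc ⊢
      rw [smul_comm, hc, smul_zero]
    have H₂ : (Submodule.span R {a • y}).annihilator ≠ ⊤ := by
      rwa [Ne, Submodule.annihilator_eq_top_iff, Submodule.span_singleton_eq_bot]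
    rwa [H₁.eq_of_not_lt (h₃ (Submodule.span R {a • y}).annihilator ⟨l.trans H₁, H₂, _, rfl⟩),
      Submodule.mem_annihilator_span_singleton, smul_comm, smul_smul]
  refine ⟨_, ⟨hPrime, y, ?_⟩, ⟨y, rfl⟩, l⟩
  have hc : (⊥ : Submodule R M).colon {y} = (Submodule.span R {y}).annihilator := by
    ext r
    rw [Submodule.mem_colon_singleton, Submodule.mem_annihilator_span_singleton, Submodule.mem_bot]
  rw [hc, hPrime.radical]

theorem stmt_5 {R N : Type*} [CommRing R] [AddCommGroup N] [Module R N]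
    [IsNoetherian R N] (K : Submodule R N)
    (hK : ∀ (p : Ideal R) [p.IsPrime], p ∈ associatedPrimes R N →
      ∀ x : LocalizedModule p.primeCompl N,
        x ∈ K.localized p.primeCompl → (∀ a ∈ p, a • x = 0) → x = 0) :
    K = ⊥ := by
  by_contra hbot
  obtain ⟨x, hxK, hx0⟩ := (Submodule.ne_bot_iff K).mp hbot
  have hx0' : (⟨x, hxK⟩ : K) ≠ 0 := by
    simpa [Submodule.mk_eq_zero] using hx0
  obtain ⟨P, hP, ⟨y, hy⟩, -⟩ := exists_le_isAssociatedPrime_of_isNoetherian' (R := R) (⟨x, hxK⟩ : K) hx0'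
  have hprime := hP.isPrime
  have hPN : P ∈ associatedPrimes R N :=
    (IsAssociatedPrime.map_of_injective (f := K.subtype) hP Subtype.coe_injective)
  have key := hK P hPN (LocalizedModule.mk (y : N) 1)
    (by
      rw [Submodule.mem_localized']
      exact ⟨(y : N), y.2, 1, by rw [← IsLocalizedModule.mk_eq_mk']⟩)
    (by
      intro a ha
      have hay : a • y = 0 := by
        rw [hy] at ha
        rwa [Submodule.mem_annihilator_span_singleton] at ha
      have hayN : a • (y : N) = 0 := by
        exact_mod_cast congrArg (Subtype.val) hay
      rw [LocalizedModule.smul'_mk, hayN, LocalizedModule.zero_mk])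
  rw [show (0 : LocalizedModule P.primeCompl N) = LocalizedModule.mk 0 1 from
    (LocalizedModule.zero_mk 1).symm, LocalizedModule.mk_eq] at key
  obtain ⟨⟨u, hunot⟩, hu⟩ := key
  simp only [one_smul, smul_zero, Submonoid.mk_smul] at hu
  have hm : u ∈ P := by
    rw [hy]
    exact (Submodule.mem_annihilator_span_singleton _ _).mpr (Subtype.ext (by simpa using hu))
  exact hunot hm
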